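/- arXiv:2501.13524 — 4 statements merged into one kernel-verified Lean document; each statement's English description precedes it below -/
import Mathlib

section
/- Let n ≥ 1, let Ω : ℂⁿ → ℂⁿ be any map, and let K ≥ 0 be a constant such that |⟨Ω(y), v⟩ − ⟨y, Ω(v)⟩| ≤ K·‖y‖·‖v‖ for all y, v ∈ ℂⁿ. Then for all x, y, u, v ∈ ℂⁿ one has |⟨x, v⟩ + ⟨y, u⟩| ≤ (2 + K)·(‖x − Ω(y)‖ + ‖y‖)·(‖u + Ω(v)‖ + ‖v‖). -/
/-- boundedness of the duality map between the derived spaces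
`d_Ω` and `d_{−Ω}` on `ℂⁿ`. -/
theorem stmt0 (n : ℕ) (hn : 1 ≤ n)
    (Ω : EuclideanSpace ℂ (Fin n) → EuclideanSpace ℂ (Fin n))
    (K : ℝ) (hK : 0 ≤ K)
    (hΩ : ∀ y v : EuclideanSpace ℂ (Fin n),
      ‖(inner ℂ (Ω y) v : ℂ) - (inner ℂ y (Ω v) : ℂ)‖ ≤ K * ‖y‖ * ‖v‖) :
    ∀ x y u v : EuclideanSpace ℂ (Fin n),
      ‖(inner ℂ x v : ℂ) + (inner ℂ y u : ℂ)‖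
        ≤ (2 + K) * (‖x - Ω y‖ + ‖y‖) * (‖u + Ω v‖ + ‖v‖) := by
  intro x y u v
  have hid : (inner ℂ x v : ℂ) + inner ℂ y u
      = inner ℂ (x - Ω y) v + ((inner ℂ (Ω y) v : ℂ) - inner ℂ y (Ω v)) + inner ℂ y (u + Ω v) := by
    simp [inner_sub_left, inner_add_right]
  have h1 : ‖(inner ℂ (x - Ω y) v : ℂ)‖ ≤ ‖x - Ω y‖ * ‖v‖ := norm_inner_le_norm _ _
  have h2 := hΩ y v
  have h3 : ‖(inner ℂ y (u + Ω v) : ℂ)‖ ≤ ‖y‖ * ‖u + Ω v‖ := norm_inner_le_norm _ _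
  have hb : ‖(inner ℂ x v : ℂ) + inner ℂ y u‖
      ≤ ‖x - Ω y‖ * ‖v‖ + K * ‖y‖ * ‖v‖ + ‖y‖ * ‖u + Ω v‖ := by
    rw [hid]
    calc ‖(inner ℂ (x - Ω y) v : ℂ) + ((inner ℂ (Ω y) v : ℂ) - inner ℂ y (Ω v)) + inner ℂ y (u + Ω v)‖
        ≤ ‖(inner ℂ (x - Ω y) v : ℂ)‖ + ‖(inner ℂ (Ω y) v : ℂ) - inner ℂ y (Ω v)‖
          + ‖(inner ℂ y (u + Ω v) : ℂ)‖ := norm_add₃_le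
      _ ≤ _ := by linarith
  have a0 : (0:ℝ) ≤ ‖x - Ω y‖ := norm_nonneg _
  have b0 : (0:ℝ) ≤ ‖y‖ := norm_nonneg _
  have c0 : (0:ℝ) ≤ ‖u + Ω v‖ := norm_nonneg _
  have d0 : (0:ℝ) ≤ ‖v‖ := norm_nonneg _
  nlinarith [mul_nonneg a0 c0, mul_nonneg b0 d0, mul_nonneg a0 d0, mul_nonneg b0 c0,
    mul_nonneg (mul_nonneg hK b0) c0, mul_nonneg (mul_nonneg hK a0) c0,
    mul_nonneg (mul_nonneg hK a0) d0]
end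

section
/- Let n ≥ 1, let Ω : ℂⁿ → ℂⁿ be any map, and let K ≥ 0 be a constant such that |⟨Ω(y), v⟩ − ⟨y, Ω(v)⟩| ≤ K·‖y‖·‖v‖ for all y, v ∈ ℂⁿ. Then for all x, y ∈ ℂⁿ with y ≠ 0 there exist u, v ∈ ℂⁿ with ‖v‖ = 1 and ‖u + Ω(v)‖ ≤ K + 1 such that |⟨x, v⟩ + ⟨y, u⟩| ≥ ‖x − Ω(y)‖ + ‖y‖. -/
/-- lower estimate for the duality map between the derived spaces
`d_Ω` and `d_{−Ω}` on `ℂⁿ`. -/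
theorem stmt1 (n : ℕ) (hn : 1 ≤ n)
    (Ω : EuclideanSpace ℂ (Fin n) → EuclideanSpace ℂ (Fin n))
    (K : ℝ) (hK : 0 ≤ K)
    (hΩ : ∀ y v : EuclideanSpace ℂ (Fin n),
      ‖(inner ℂ (Ω y) v : ℂ) - (inner ℂ y (Ω v) : ℂ)‖ ≤ K * ‖y‖ * ‖v‖) :
    ∀ x y : EuclideanSpace ℂ (Fin n), y ≠ 0 →
      ∃ u v : EuclideanSpace ℂ (Fin n), ‖v‖ = 1 ∧ ‖u + Ω v‖ ≤ K + 1 ∧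
        ‖x - Ω y‖ + ‖y‖ ≤ ‖(inner ℂ x v : ℂ) + (inner ℂ y u : ℂ)‖ := by
  intro x y hy
  set w : EuclideanSpace ℂ (Fin n) := x - Ω y with hw
  have hyn : (0:ℝ) < ‖y‖ := norm_pos_iff.mpr hy
  obtain ⟨v, hv1, hv2⟩ : ∃ v : EuclideanSpace ℂ (Fin n),
      ‖v‖ = 1 ∧ (inner ℂ w v : ℂ) = (‖w‖ : ℂ) := by
    by_cases hw0 : w = 0
    · refine ⟨(‖y‖⁻¹ : ℂ) • y, ?_, ?_⟩
      · rw [norm_smul]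
        simp [hyn.ne']
      · simp [hw0]
    · have hwn : (0:ℝ) < ‖w‖ := norm_pos_iff.mpr hw0
      refine ⟨(‖w‖⁻¹ : ℂ) • w, ?_, ?_⟩
      · rw [norm_smul]
        simp [hwn.ne']
      · rw [inner_smul_right, inner_self_eq_norm_sq_to_K]
        have : (‖w‖:ℂ) ≠ 0 := by exact_mod_cast hwn.ne'
        field_simp
        rfl
  set c : ℂ := (((K+1)/‖y‖ : ℝ) : ℂ) with hc
  refine ⟨-Ω v + c • y, v, hv1, ?_, ?_⟩
  · have h1 : -Ω v + c • y + Ω v = c • y := by abel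
    rw [h1, norm_smul]
    have : ‖c‖ = (K+1)/‖y‖ := by
      rw [hc, Complex.norm_real, Real.norm_of_nonneg (by positivity)]
    rw [this]
    field_simp
    exact le_rfl
  · have hx : x = w + Ω y := by rw [hw]; abel
    have hiu : (inner ℂ y (-Ω v + c • y) : ℂ)
        = -(inner ℂ y (Ω v) : ℂ) + c * (‖y‖:ℂ)^2 := by
      rw [inner_add_right, inner_neg_right, inner_smul_right,
        inner_self_eq_norm_sq_to_K]
      norm_cast
    have hix : (inner ℂ x v : ℂ) = (‖w‖:ℂ) + (inner ℂ (Ω y) v : ℂ) := by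
      rw [hx, inner_add_left, hv2]
    set δ : ℂ := (inner ℂ (Ω y) v : ℂ) - (inner ℂ y (Ω v) : ℂ) with hδ
    have hδn : ‖δ‖ ≤ K * ‖y‖ := by
      have := hΩ y v
      rwa [hv1, mul_one] at this
    have hS : (inner ℂ x v : ℂ) + (inner ℂ y (-Ω v + c • y) : ℂ)
        = (‖w‖:ℂ) + δ + (((K+1) * ‖y‖ : ℝ):ℂ) := by
      rw [hix, hiu, hδ, hc]
      push_cast
      have : (‖y‖:ℂ) ≠ 0 := by exact_mod_cast hyn.ne'
      field_simp
      ring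
    rw [hS]
    have hre : ‖w‖ + ‖y‖ ≤ ((‖w‖:ℂ) + δ + (((K+1) * ‖y‖ : ℝ):ℂ)).re := by
      simp only [Complex.add_re, Complex.ofReal_re]
      have h2 : -(K * ‖y‖) ≤ δ.re := by
        have := (abs_le.mp (Complex.abs_re_le_norm δ)).1
        have h3 : -‖δ‖ ≤ δ.re := neg_abs_le δ.re |>.trans (le_refl _) |> fun _ => this
        nlinarith [Complex.abs_re_le_norm δ, hδn, hδn]
      nlinarith
    calc ‖w‖ + ‖y‖ ≤ ((‖w‖:ℂ) + δ + (((K+1) * ‖y‖ : ℝ):ℂ)).re := hre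
      _ ≤ ‖(‖w‖:ℂ) + δ + (((K+1) * ‖y‖ : ℝ):ℂ)‖ := Complex.re_le_norm _
end

section
/- Let Ω be a map from complex ℓ₂ to the space ω of all complex sequences such that supp Ω(x) ⊆ supp x for every x, and let C ≥ 0 be such that for every a ∈ ℓ_∞ and x ∈ ℓ₂ one has Ω(a·x) − a·Ω(x) ∈ ℓ₂ with ‖Ω(a·x) − a·Ω(x)‖₂ ≤ C·‖a‖_∞·‖x‖₂. Suppose K ≥ 0 is such that for every finitely supported y ∈ ℓ₂ the average, over all sign patterns ε : ℕ → {−1, 1}, of ‖Ω(ε·y)‖₂ + ‖y‖₂ is at most K·‖y‖₂ (the average being taken over the finitely many sign patterns on supp y, extended by 1 elsewhere). Then ‖Ω(y)‖₂ ≤ ((1 + C)·K − 1)·‖y‖₂ for every finitely supported y ∈ ℓ₂. -/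
/-- membership in complex `ℓ₂` for a sequence -/
def Meml2 (f : ℕ → ℂ) : Prop := Summable fun j => ‖f j‖ ^ 2

/-- the `ℓ₂` norm of a sequence -/
noncomputable def l2norm (f : ℕ → ℂ) : ℝ := Real.sqrt (∑' j, ‖f j‖ ^ 2)

lemma meml2_of_subset {f : ℕ → ℂ} (s : Finset ℕ) (hf : ∀ j ∉ s, f j = 0) : Meml2 f := by
  apply summable_of_ne_finset_zero (s := s)
  intro j hj
  simp [hf j hj]

lemma l2norm_eq_norm (s : Finset ℕ) (f : ℕ → ℂ) (hf : ∀ j ∉ s, f j = 0)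
    (g : EuclideanSpace ℂ s) (hg : ∀ j : s, g j = f j) :
    l2norm f = ‖g‖ := by
  rw [l2norm, tsum_eq_sum (s := s) (f := fun j => ‖f j‖ ^ 2) (by intro b hb; simp [hf b hb]),
    EuclideanSpace.norm_eq g]
  congr 1
  rw [← Finset.sum_coe_sort s fun j => ‖f j‖ ^ 2]
  exact Finset.sum_congr rfl fun j _ => by rw [hg]

lemma l2norm_nonneg (f : ℕ → ℂ) : 0 ≤ l2norm f := Real.sqrt_nonneg _


/-- a uniform Rademacher-average bound on the derived quasi-norm
forces a support-preserving centralizer to be bounded on finitely supported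
vectors. -/
theorem stmt6 (Ω : (ℕ → ℂ) → (ℕ → ℂ))
    (hsupp : ∀ x : ℕ → ℂ, Meml2 x → ∀ j, x j = 0 → Ω x j = 0)
    (C : ℝ) (hC : 0 ≤ C)
    (hcent : ∀ (a x : ℕ → ℂ) (A : ℝ), (∀ j, ‖a j‖ ≤ A) → Meml2 x →
      Meml2 (fun j => Ω (fun i => a i * x i) j - a j * Ω x j) ∧
      l2norm (fun j => Ω (fun i => a i * x i) j - a j * Ω x j) ≤ C * A * l2norm x)
    (K : ℝ) (hK : 0 ≤ K)
    (havg : ∀ (y : ℕ → ℂ) (hy : (Function.support y).Finite),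
      ((2 : ℝ) ^ hy.toFinset.card)⁻¹ *
          ∑ T ∈ hy.toFinset.powerset,
            (l2norm (Ω (fun i => (if i ∈ T then (-1 : ℂ) else 1) * y i)) + l2norm y)
        ≤ K * l2norm y) :
    ∀ (y : ℕ → ℂ), (Function.support y).Finite →
      l2norm (Ω y) ≤ ((1 + C) * K - 1) * l2norm y := by
  intro y hy
  by_cases hy0 : y = 0
  · have hM : Meml2 y := meml2_of_subset ∅ (by simp [hy0])
    have hΩ0 : ∀ j, Ω y j = 0 := fun j => hsupp y hM j (by simp [hy0])
    have h1 : l2norm (Ω y) = 0 := by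
      simp [l2norm, funext hΩ0]
    have h2 : l2norm y = 0 := by simp [l2norm, hy0]
    simp [h1, h2]
  · set s := hy.toFinset with hs
    have hys : ∀ j ∉ s, y j = 0 := by
      intro j hj
      by_contra h
      exact hj (by simpa [hs] using h)
    have hMy : Meml2 y := meml2_of_subset s hys
    set ny := l2norm y with hny
    have hnypos : 0 < ny := by
      obtain ⟨j, hj⟩ : ∃ j, y j ≠ 0 := by
        by_contra h
        push_neg at h
        exact hy0 (funext h)
      rw [hny, l2norm]
      apply Real.sqrt_pos.mpr
      exact Summable.tsum_pos hMy (fun b => by positivity) j (pow_pos (norm_pos_iff.mpr hj) 2)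
    -- key pointwise (in T) bound
    have key : ∀ T : Finset ℕ,
        l2norm (Ω y) ≤
          l2norm (Ω (fun i => (if i ∈ T then (-1 : ℂ) else 1) * y i)) + C * ny := by
      intro T
      set a : ℕ → ℂ := fun i => (if i ∈ T then (-1 : ℂ) else 1) with ha
      have hanorm : ∀ j, ‖a j‖ = 1 := by
        intro j; by_cases h : j ∈ T <;> simp [ha, h]
      obtain ⟨hmem, hle⟩ := hcent a y 1 (fun j => (hanorm j).le) hMy
      have hΩy0 : ∀ j ∉ s, Ω y j = 0 := fun j hj => hsupp y hMy j (hys j hj)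
      have hay0 : ∀ j ∉ s, a j * y j = 0 := fun j hj => by simp [hys j hj]
      have hMay : Meml2 (fun i => a i * y i) := meml2_of_subset s hay0
      have hΩay0 : ∀ j ∉ s, Ω (fun i => a i * y i) j = 0 :=
        fun j hj => hsupp _ hMay j (hay0 j hj)
      set u : EuclideanSpace ℂ s := WithLp.toLp 2 (fun j => a j * Ω y j) with hu
      set v : EuclideanSpace ℂ s := WithLp.toLp 2 (fun j => Ω (fun i => a i * y i) j) with hv
      have e1 : l2norm (Ω y) = l2norm (fun j => a j * Ω y j) := by
        rw [l2norm, l2norm]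
        congr 1
        apply tsum_congr
        intro j
        rw [norm_mul, hanorm j, one_mul]
      have e2 : l2norm (fun j => a j * Ω y j) = ‖u‖ :=
        l2norm_eq_norm s _ (fun j hj => by simp [hΩy0 j hj]) u (fun j => rfl)
      have e3 : l2norm (Ω (fun i => a i * y i)) = ‖v‖ :=
        l2norm_eq_norm s _ (fun j hj => hΩay0 j hj) v (fun j => rfl)
      have e4 : l2norm (fun j => Ω (fun i => a i * y i) j - a j * Ω y j) = ‖v - u‖ :=
        l2norm_eq_norm s _ (fun j hj => by simp [hΩay0 j hj, hΩy0 j hj]) (v - u)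
          (fun j => by simp [hu, hv])
      have tri : ‖u‖ ≤ ‖v‖ + ‖v - u‖ := by
        calc ‖u‖ = ‖v - (v - u)‖ := by rw [sub_sub_cancel]
        _ ≤ ‖v‖ + ‖v - u‖ := norm_sub_le _ _
      rw [e1, e2]
      calc ‖u‖ ≤ ‖v‖ + ‖v - u‖ := tri
      _ ≤ l2norm (Ω (fun i => a i * y i)) + C * ny := by
          rw [← e3, ← e4]
          have := hle
          rw [mul_one] at this
          linarith
    -- averaging
    have hpow : (0:ℝ) < (2:ℝ) ^ s.card := by positivity
    have hcard : (s.powerset.card : ℝ) = (2:ℝ) ^ s.card := by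
      rw [Finset.card_powerset]; push_cast; ring
    have hsum_lb : ∀ (c : ℝ), (∀ T ∈ s.powerset,
        c ≤ l2norm (Ω (fun i => (if i ∈ T then (-1 : ℂ) else 1) * y i)) + ny) →
        (2:ℝ) ^ s.card * c ≤
          ∑ T ∈ s.powerset,
            (l2norm (Ω (fun i => (if i ∈ T then (-1 : ℂ) else 1) * y i)) + ny) := by
      intro c hc
      calc (2:ℝ) ^ s.card * c = ∑ _T ∈ s.powerset, c := by
            rw [Finset.sum_const, nsmul_eq_mul, hcard]
      _ ≤ _ := Finset.sum_le_sum hc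
    have havg' := havg y hy
    rw [← hs, ← hny] at havg'
    -- K ≥ 1
    have hK1 : (1:ℝ) ≤ K := by
      have h1 := hsum_lb ny (fun T _ => by
        have := l2norm_nonneg (Ω (fun i => (if i ∈ T then (-1 : ℂ) else 1) * y i))
        linarith)
      have h2 : ny ≤ K * ny := by
        have := mul_le_mul_of_nonneg_left h1 (le_of_lt (inv_pos.mpr hpow))
        rw [← mul_assoc, inv_mul_cancel₀ (ne_of_gt hpow), one_mul] at this
        linarith
      exact le_of_mul_le_mul_right (by linarith) hnypos
    -- main bound
    have h1 := hsum_lb (l2norm (Ω y) + (1 - C) * ny) (fun T _ => by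
      have := key T
      linarith)
    have h2 : l2norm (Ω y) + (1 - C) * ny ≤ K * ny := by
      have := mul_le_mul_of_nonneg_left h1 (le_of_lt (inv_pos.mpr hpow))
      rw [← mul_assoc, inv_mul_cancel₀ (ne_of_gt hpow), one_mul] at this
      linarith
    nlinarith [mul_nonneg (mul_nonneg hC (sub_nonneg.mpr hK1)) hnypos.le]
end

section
/- There is a constant C ≥ 1 such that for every n ≥ 2 there exists an injective linear map S : ℂ^{n + ⌊log n⌋} → ℂⁿ × ℂⁿ with C⁻¹·‖w‖₂ ≤ q_n(S(w)) ≤ C·‖w‖₂ for all w ∈ ℂ^{n + ⌊log n⌋}, where q_n(x, y) = ‖x − 𝒦(y)‖₂ + ‖y‖₂ and 𝒦(y)_j = y_j·log(‖y‖₂/|y_j|) when y_j ≠ 0 and 0 otherwise. -/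
/-- the Kalton–Peck map on `ℂⁿ`: `𝒦(y)_j = y_j · log(‖y‖₂/|y_j|)` (and `0` when `y_j = 0`). -/
noncomputable def KP (n : ℕ) (y : EuclideanSpace ℂ (Fin n)) : EuclideanSpace ℂ (Fin n) :=
  WithLp.toLp 2 (fun j => if y j = 0 then 0 else y j * (Real.log (‖y‖ / ‖y j‖) : ℂ))

/-- the Kalton–Peck quasi-norm on `ℂⁿ × ℂⁿ` (the space `Z₂ⁿ`). -/
noncomputable def qKP (n : ℕ)
    (z : EuclideanSpace ℂ (Fin n) × EuclideanSpace ℂ (Fin n)) : ℝ :=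
  ‖z.1 - KP n z.2‖ + ‖z.2‖

open Finset

namespace Stmt11


def sg (t : Bool) : ℂ := if t then -1 else 1

@[simp] lemma sg_true : sg true = -1 := rfl
@[simp] lemma sg_false : sg false = 1 := rfl

noncomputable def Xw {m : ℕ} (b : Fin m → ℂ) (s : Fin m → Bool) : ℂ :=
  ∑ k, b k * sg (s k)

lemma Xw_cons {m : ℕ} (b : Fin (m + 1) → ℂ) (t : Bool) (s : Fin m → Bool) :
    Xw b (Fin.cons t s) = b 0 * sg t + Xw (fun k => b k.succ) s := by
  simp [Xw, Fin.sum_univ_succ]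

lemma pll (z w : ℂ) :
    Complex.normSq (z + w) + Complex.normSq (z - w)
      = 2 * Complex.normSq z + 2 * Complex.normSq w := by
  simp only [Complex.normSq_apply, Complex.add_re, Complex.add_im, Complex.sub_re,
    Complex.sub_im]
  ring

lemma quart (z w : ℂ) :
    Complex.normSq (z + w) ^ 2 + Complex.normSq (z - w) ^ 2
      ≤ 2 * (Complex.normSq z + Complex.normSq w) ^ 2
        + 8 * Complex.normSq z * Complex.normSq w := by
  have h1 : Complex.normSq (z + w) = Complex.normSq z + Complex.normSq w
      + 2 * (z * (starRingEnd ℂ) w).re := by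
    simp only [Complex.normSq_apply, Complex.add_re, Complex.add_im, Complex.mul_re,
      Complex.conj_re, Complex.conj_im]
    ring
  have h2 : Complex.normSq (z - w) = Complex.normSq z + Complex.normSq w
      - 2 * (z * (starRingEnd ℂ) w).re := by
    simp only [Complex.normSq_apply, Complex.sub_re, Complex.sub_im, Complex.mul_re,
      Complex.conj_re, Complex.conj_im]
    ring
  have h3 : ((z * (starRingEnd ℂ) w).re) ^ 2 ≤ Complex.normSq z * Complex.normSq w := by
    have h4 := Complex.normSq_mul z ((starRingEnd ℂ) w)
    rw [Complex.normSq_conj] at h4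
    nlinarith [Complex.normSq_apply (z * (starRingEnd ℂ) w),
      sq_nonneg ((z * (starRingEnd ℂ) w).im)]
  rw [h1, h2]; nlinarith [h3]

lemma pair_eq {m : ℕ} (b : Fin (m + 1) → ℂ) (s : Fin m → Bool) (F : ℝ → ℝ) :
    F (Complex.normSq (Xw b (Fin.cons true s)))
      + F (Complex.normSq (Xw b (Fin.cons false s)))
    = F (Complex.normSq (Xw (fun k => b k.succ) s - b 0))
      + F (Complex.normSq (Xw (fun k => b k.succ) s + b 0)) := by
  rw [Xw_cons, Xw_cons]
  simp only [sg_true, sg_false, mul_neg_one, mul_one]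
  rw [add_comm (-(b 0)), ← sub_eq_add_neg, add_comm (b 0)]

/-- second moment: exact orthogonality -/
lemma sum_normSq_Xw {m : ℕ} (b : Fin m → ℂ) :
    ∑ s : Fin m → Bool, Complex.normSq (Xw b s)
      = 2 ^ m * ∑ k, Complex.normSq (b k) := by
  induction m with
  | zero => simp [Xw]
  | succ m ih =>
    rw [← Equiv.sum_comp (Fin.consEquiv fun _ : Fin (m + 1) => Bool)
      (fun s => Complex.normSq (Xw b s)), Fintype.sum_prod_type]
    rw [Fintype.sum_bool]
    have step : ∀ s : Fin m → Bool,
        Complex.normSq (Xw b ((Fin.consEquiv fun _ : Fin (m+1) => Bool) (true, s)))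
        + Complex.normSq (Xw b ((Fin.consEquiv fun _ : Fin (m+1) => Bool) (false, s)))
        = 2 * Complex.normSq (Xw (fun k => b k.succ) s) + 2 * Complex.normSq (b 0) := by
      intro s
      have h := pair_eq b s id
      simp only [id] at h
      have e1 : (Fin.consEquiv fun _ : Fin (m+1) => Bool) (true, s) = Fin.cons true s := rfl
      have e2 : (Fin.consEquiv fun _ : Fin (m+1) => Bool) (false, s) = Fin.cons false s := rfl
      rw [e1, e2, h]
      have hp := pll (Xw (fun k => b k.succ) s) (b 0)
      linarith
    rw [← Finset.sum_add_distrib, Finset.sum_congr rfl (fun s _ => step s),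
      Finset.sum_add_distrib, ← Finset.mul_sum, ih (fun k => b k.succ),
      Finset.sum_const]
    have hcard : (Finset.univ : Finset (Fin m → Bool)).card = 2 ^ m := by
      simp [Fintype.card_fun]
    rw [hcard, Fin.sum_univ_succ]
    push_cast
    ring

/-- fourth moment (Khintchine-type bound) -/
lemma sum_sq_normSq_Xw {m : ℕ} (b : Fin m → ℂ) :
    ∑ s : Fin m → Bool, (Complex.normSq (Xw b s)) ^ 2
      ≤ 3 * 2 ^ m * (∑ k, Complex.normSq (b k)) ^ 2 := by
  induction m with
  | zero =>
    simp [Xw]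
  | succ m ih =>
    rw [← Equiv.sum_comp (Fin.consEquiv fun _ : Fin (m + 1) => Bool)
      (fun s => (Complex.normSq (Xw b s)) ^ 2), Fintype.sum_prod_type]
    rw [Fintype.sum_bool]
    set b' : Fin m → ℂ := fun k => b k.succ with hb'
    set β' := ∑ k, Complex.normSq (b' k) with hβ'
    set nc := Complex.normSq (b 0) with hnc
    have step : ∀ s : Fin m → Bool,
        (Complex.normSq (Xw b ((Fin.consEquiv fun _ : Fin (m+1) => Bool) (true, s)))) ^ 2
        + (Complex.normSq (Xw b ((Fin.consEquiv fun _ : Fin (m+1) => Bool) (false, s)))) ^ 2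
        ≤ 2 * (Complex.normSq (Xw b' s)) ^ 2
          + (12 * nc) * Complex.normSq (Xw b' s) + 2 * nc ^ 2 := by
      intro s
      have h := pair_eq b s (fun x => x ^ 2)
      have e1 : (Fin.consEquiv fun _ : Fin (m+1) => Bool) (true, s) = Fin.cons true s := rfl
      have e2 : (Fin.consEquiv fun _ : Fin (m+1) => Bool) (false, s) = Fin.cons false s := rfl
      rw [e1, e2, h]
      have hq := quart (Xw b' s) (b 0)
      nlinarith [hq]
    have h1 : ∑ s : Fin m → Bool,
        ((Complex.normSq (Xw b ((Fin.consEquiv fun _ : Fin (m+1) => Bool) (true, s)))) ^ 2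
        + (Complex.normSq (Xw b ((Fin.consEquiv fun _ : Fin (m+1) => Bool) (false, s)))) ^ 2)
        ≤ ∑ s : Fin m → Bool, (2 * (Complex.normSq (Xw b' s)) ^ 2
          + (12 * nc) * Complex.normSq (Xw b' s) + 2 * nc ^ 2) :=
      Finset.sum_le_sum (fun s _ => step s)
    rw [Finset.sum_add_distrib] at h1
    refine le_trans h1 ?_
    rw [Finset.sum_add_distrib, Finset.sum_add_distrib, ← Finset.mul_sum, ← Finset.mul_sum,
      Finset.sum_const, sum_normSq_Xw b']
    have hcard : (Finset.univ : Finset (Fin m → Bool)).card = 2 ^ m := by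
      simp [Fintype.card_fun]
    rw [hcard]
    have hS4 := ih b'
    have hβ'0 : 0 ≤ β' := Finset.sum_nonneg fun k _ => Complex.normSq_nonneg _
    have hnc0 : 0 ≤ nc := Complex.normSq_nonneg _
    have hN : (0:ℝ) < 2 ^ m := by positivity
    have hsum : ∑ k, Complex.normSq (b k) = nc + β' := by
      rw [Fin.sum_univ_succ]
    rw [hsum, nsmul_eq_mul, ← hβ']
    rw [← hβ'] at hS4
    have hpow : (2:ℝ) ^ (m + 1) = 2 * 2 ^ m := by ring
    rw [hpow]
    push_cast
    nlinarith [hS4, hβ'0, hnc0, hN, mul_nonneg (mul_nonneg hN.le hnc0) hnc0,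
      mul_nonneg (mul_nonneg hN.le hnc0) hβ'0]



variable {n m : ℕ}

/-- the normalized Walsh vector inside `ℂⁿ` -/
noncomputable def Yv (ι : (Fin m → Bool) ↪ Fin n) (b : Fin m → ℂ) :
    EuclideanSpace ℂ (Fin n) :=
  WithLp.toLp 2 (fun j => (((Real.sqrt (2 ^ m))⁻¹ : ℝ) : ℂ) * ∑ s, if ι s = j then Xw b s else 0)

lemma Yv_apply (ι : (Fin m → Bool) ↪ Fin n) (b : Fin m → ℂ) (s : Fin m → Bool) :
    Yv ι b (ι s) = (((Real.sqrt (2 ^ m))⁻¹ : ℝ) : ℂ) * Xw b s := by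
  unfold Yv
  simp only [WithLp.ofLp_toLp]
  congr 1
  simp [EmbeddingLike.apply_eq_iff_eq]

lemma Yv_apply_of_ne (ι : (Fin m → Bool) ↪ Fin n) (b : Fin m → ℂ) (j : Fin n)
    (h : ∀ s, ι s ≠ j) : Yv ι b j = 0 := by
  unfold Yv
  simp only [WithLp.ofLp_toLp]
  rw [Finset.sum_congr rfl (fun s _ => if_neg (h s))]
  simp

lemma norm_sq_Yv_apply (ι : (Fin m → Bool) ↪ Fin n) (b : Fin m → ℂ) (s : Fin m → Bool) :
    ‖Yv ι b (ι s)‖ ^ 2 = ((2:ℝ) ^ m)⁻¹ * Complex.normSq (Xw b s) := by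
  rw [Yv_apply, norm_mul, mul_pow, Complex.norm_real, Real.norm_eq_abs]
  rw [abs_of_nonneg (by positivity)]
  rw [Complex.sq_norm]
  congr 1
  rw [inv_pow, Real.sq_sqrt (by positivity)]

lemma sum_sq_norm_Yv (ι : (Fin m → Bool) ↪ Fin n) (b : Fin m → ℂ) :
    ∑ j, ‖Yv ι b j‖ ^ 2 = ∑ k, Complex.normSq (b k) := by
  have hsplit : ∑ j, ‖Yv ι b j‖ ^ 2 = ∑ j ∈ Finset.image ι Finset.univ, ‖Yv ι b j‖ ^ 2 := by
    symm
    apply Finset.sum_subset (Finset.subset_univ _)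
    intro j _ hj
    have hz : Yv ι b j = 0 := by
      apply Yv_apply_of_ne
      intro s hs
      exact hj (Finset.mem_image.mpr ⟨s, Finset.mem_univ s, hs⟩)
    rw [hz]
    simp
  rw [hsplit, Finset.sum_image (fun x _ y _ h => ι.injective h)]
  rw [Finset.sum_congr rfl (fun s _ => norm_sq_Yv_apply ι b s), ← Finset.mul_sum,
    sum_normSq_Xw]
  rw [← mul_assoc, inv_mul_cancel₀ (by positivity), one_mul]

lemma norm_Yv (ι : (Fin m → Bool) ↪ Fin n) (b : Fin m → ℂ) :
    ‖Yv ι b‖ = Real.sqrt (∑ k, Complex.normSq (b k)) := by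
  rw [EuclideanSpace.norm_eq, sum_sq_norm_Yv]

lemma tlog {t : ℝ} (ht : 0 < t) : t ^ 2 * Real.log t ^ 2 ≤ 1 + t ^ 4 := by
  rcases le_or_gt t 1 with h | h
  · have h1 : Real.log t ^ 2 = Real.log t⁻¹ ^ 2 := by rw [Real.log_inv]; ring
    have h2 : 0 ≤ Real.log t⁻¹ := Real.log_nonneg (by
      rw [le_inv_comm₀] <;> simp [ht, h])
    have h3 : Real.log t⁻¹ ≤ t⁻¹ := by
      have := Real.log_le_sub_one_of_pos (inv_pos.mpr ht)
      linarith
    have h4 : t ^ 2 * Real.log t⁻¹ ^ 2 ≤ t ^ 2 * (t⁻¹) ^ 2 :=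
      mul_le_mul_of_nonneg_left (pow_le_pow_left₀ h2 h3 2) (by positivity)
    have h5 : t ^ 2 * (t⁻¹) ^ 2 = 1 := by field_simp
    rw [h1]
    nlinarith [pow_pos ht 4]
  · have h2 : 0 ≤ Real.log t := Real.log_nonneg h.le
    have h3 : Real.log t ≤ t := by
      have := Real.log_le_sub_one_of_pos ht
      linarith
    have h4 : t ^ 2 * Real.log t ^ 2 ≤ t ^ 2 * t ^ 2 :=
      mul_le_mul_of_nonneg_left (pow_le_pow_left₀ h2 h3 2) (by positivity)
    nlinarith



/-- the difference between the linear correction and the Kalton-Peck map on `Yv` -/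
noncomputable def Dv (ι : (Fin m → Bool) ↪ Fin n) (b : Fin m → ℂ) :
    EuclideanSpace ℂ (Fin n) :=
  WithLp.toLp 2 (fun j => ((Real.log (Real.sqrt (2 ^ m)) : ℝ) : ℂ) * Yv ι b j - KP n (Yv ι b) j)

lemma beta_pos {b : Fin m → ℂ} (hb : b ≠ 0) : 0 < ∑ k, Complex.normSq (b k) := by
  obtain ⟨k, hk⟩ := Function.ne_iff.mp hb
  have h1 : 0 < Complex.normSq (b k) := Complex.normSq_pos.mpr hk
  have h2 : Complex.normSq (b k) ≤ ∑ k, Complex.normSq (b k) :=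
    Finset.single_le_sum (fun i _ => Complex.normSq_nonneg _) (Finset.mem_univ k)
  linarith

lemma Dv_apply_of_ne (ι : (Fin m → Bool) ↪ Fin n) (b : Fin m → ℂ) (j : Fin n)
    (h : ∀ s, ι s ≠ j) : Dv ι b j = 0 := by
  have hY : Yv ι b j = 0 := Yv_apply_of_ne ι b j h
  simp [Dv, KP, hY]

lemma norm_sq_Dv_apply (ι : (Fin m → Bool) ↪ Fin n) (b : Fin m → ℂ) (hb : b ≠ 0)
    (s : Fin m → Bool) :
    ‖Dv ι b (ι s)‖ ^ 2 ≤ ((2:ℝ) ^ m)⁻¹ *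
      ((∑ k, Complex.normSq (b k))
        + (Complex.normSq (Xw b s)) ^ 2 / (∑ k, Complex.normSq (b k))) := by
  set β := ∑ k, Complex.normSq (b k) with hβ
  have hβpos : 0 < β := beta_pos hb
  by_cases hX : Xw b s = 0
  · have hY : Yv ι b (ι s) = 0 := by rw [Yv_apply, hX, mul_zero]
    have hD : Dv ι b (ι s) = 0 := by simp [Dv, KP, hY]
    rw [hD]
    have : (0:ℝ) ≤ ((2:ℝ) ^ m)⁻¹ * (β + (Complex.normSq (Xw b s)) ^ 2 / β) := by
      positivity
    simpa using this
  · have hc0 : (0:ℝ) < (Real.sqrt (2 ^ m))⁻¹ := by positivity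
    have hYj := Yv_apply ι b s
    have hYjne : Yv ι b (ι s) ≠ 0 := by
      rw [hYj]
      exact mul_ne_zero (Complex.ofReal_ne_zero.mpr hc0.ne') hX
    have hnormYj : ‖Yv ι b (ι s)‖ = (Real.sqrt (2 ^ m))⁻¹ * ‖Xw b s‖ := by
      rw [hYj, norm_mul, Complex.norm_real, Real.norm_eq_abs, abs_of_nonneg hc0.le]
    have hXpos : 0 < ‖Xw b s‖ := norm_pos_iff.mpr hX
    have hKP : KP n (Yv ι b) (ι s)
        = Yv ι b (ι s) * ((Real.log (‖Yv ι b‖ / ‖Yv ι b (ι s)‖) : ℝ) : ℂ) := by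
      simp [KP, hYjne]
    have hlog : Real.log (‖Yv ι b‖ / ‖Yv ι b (ι s)‖)
        = Real.log (Real.sqrt (2 ^ m)) + Real.log (Real.sqrt β / ‖Xw b s‖) := by
      rw [norm_Yv, hnormYj, ← hβ]
      rw [show Real.sqrt β / ((Real.sqrt (2 ^ m))⁻¹ * ‖Xw b s‖)
          = Real.sqrt (2 ^ m) * (Real.sqrt β / ‖Xw b s‖) by
        field_simp]
      rw [Real.log_mul (by positivity) (by positivity)]
    have hDv : Dv ι b (ι s)
        = -(Yv ι b (ι s) * ((Real.log (Real.sqrt β / ‖Xw b s‖) : ℝ) : ℂ)) := by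
      show ((Real.log (Real.sqrt (2 ^ m)) : ℝ) : ℂ) * Yv ι b (ι s) - KP n (Yv ι b) (ι s) = _
      rw [hKP, hlog]
      push_cast
      ring
    rw [hDv, norm_neg, norm_mul, mul_pow, norm_sq_Yv_apply]
    rw [Complex.norm_real, Real.norm_eq_abs, sq_abs]
    set L := Real.log (Real.sqrt β / ‖Xw b s‖) with hL
    have key : Complex.normSq (Xw b s) * L ^ 2 ≤ β + (Complex.normSq (Xw b s)) ^ 2 / β := by
      set t := ‖Xw b s‖ / Real.sqrt β with htdef
      have ht : 0 < t := by positivity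
      have hlt := tlog ht
      have h1 : L = - Real.log t := by
        rw [hL, ← Real.log_inv]
        congr 1
        rw [htdef]
        field_simp
      have h2 : t ^ 2 = Complex.normSq (Xw b s) / β := by
        rw [htdef, div_pow, Real.sq_sqrt hβpos.le, Complex.sq_norm]
      have h3 : L ^ 2 = Real.log t ^ 2 := by rw [h1]; ring
      have h4 : Complex.normSq (Xw b s) = β * t ^ 2 := by
        rw [h2]; field_simp
      rw [h3, h4]
      calc β * t ^ 2 * Real.log t ^ 2 = β * (t ^ 2 * Real.log t ^ 2) := by ring
        _ ≤ β * (1 + t ^ 4) := mul_le_mul_of_nonneg_left hlt hβpos.le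
        _ = β + (β * t ^ 2) ^ 2 / β := by field_simp
    have hNinv : (0:ℝ) ≤ ((2:ℝ) ^ m)⁻¹ := by positivity
    calc ((2:ℝ) ^ m)⁻¹ * Complex.normSq (Xw b s) * L ^ 2
        = ((2:ℝ) ^ m)⁻¹ * (Complex.normSq (Xw b s) * L ^ 2) := by ring
      _ ≤ ((2:ℝ) ^ m)⁻¹ * (β + (Complex.normSq (Xw b s)) ^ 2 / β) :=
          mul_le_mul_of_nonneg_left key hNinv

lemma Yv_zero (ι : (Fin m → Bool) ↪ Fin n) : Yv ι (0 : Fin m → ℂ) = 0 := by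
  ext j
  simp [Yv, Xw]

lemma sum_sq_norm_Dv (ι : (Fin m → Bool) ↪ Fin n) (b : Fin m → ℂ) :
    ∑ j, ‖Dv ι b j‖ ^ 2 ≤ 4 * ∑ k, Complex.normSq (b k) := by
  by_cases hb : b = 0
  · subst hb
    have hD : Dv ι (0 : Fin m → ℂ) = 0 := by
      ext j
      simp [Dv, KP, Yv_zero]
    rw [hD]
    simp
  · set β := ∑ k, Complex.normSq (b k) with hβ
    have hβpos : 0 < β := beta_pos hb
    have hsplit : ∑ j, ‖Dv ι b j‖ ^ 2
        = ∑ j ∈ Finset.image ι Finset.univ, ‖Dv ι b j‖ ^ 2 := by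
      symm
      apply Finset.sum_subset (Finset.subset_univ _)
      intro j _ hj
      have hz : Dv ι b j = 0 := by
        apply Dv_apply_of_ne
        intro s hs
        exact hj (Finset.mem_image.mpr ⟨s, Finset.mem_univ s, hs⟩)
      rw [hz]
      simp
    rw [hsplit, Finset.sum_image (fun x _ y _ h => ι.injective h)]
    have hstep := Finset.sum_le_sum (fun s (_ : s ∈ Finset.univ) => norm_sq_Dv_apply ι b hb s)
    refine le_trans hstep ?_
    rw [← Finset.mul_sum, Finset.sum_add_distrib, Finset.sum_const, ← Finset.sum_div]
    have hcard : (Finset.univ : Finset (Fin m → Bool)).card = 2 ^ m := by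
      simp [Fintype.card_fun]
    rw [hcard]
    have h4 := sum_sq_normSq_Xw b
    rw [← hβ] at h4
    have hN : (0:ℝ) < 2 ^ m := by positivity
    have hstep2 : (∑ s : Fin m → Bool, Complex.normSq (Xw b s) ^ 2) / β
        ≤ 3 * 2 ^ m * β := by
      rw [div_le_iff₀ hβpos]
      calc (∑ s : Fin m → Bool, Complex.normSq (Xw b s) ^ 2) ≤ 3 * 2 ^ m * β ^ 2 := h4
        _ = 3 * 2 ^ m * β * β := by ring
    have hsmul : (2 ^ m : ℕ) • β = (2:ℝ) ^ m * β := by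
      rw [nsmul_eq_mul]
      push_cast
      ring
    rw [hsmul]
    calc ((2:ℝ) ^ m)⁻¹ * (2 ^ m * β + (∑ s : Fin m → Bool, Complex.normSq (Xw b s) ^ 2) / β)
        ≤ ((2:ℝ) ^ m)⁻¹ * (2 ^ m * β + 3 * 2 ^ m * β) := by
          apply mul_le_mul_of_nonneg_left _ (by positivity)
          linarith
      _ = 4 * β := by field_simp; ring


lemma Xw_add {m : ℕ} (b b' : Fin m → ℂ) (s : Fin m → Bool) :
    Xw (fun k => b k + b' k) s = Xw b s + Xw b' s := by
  simp [Xw, add_mul, Finset.sum_add_distrib]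

lemma Xw_smul {m : ℕ} (a : ℂ) (b : Fin m → ℂ) (s : Fin m → Bool) :
    Xw (fun k => a * b k) s = a * Xw b s := by
  simp [Xw, Finset.mul_sum, mul_assoc]

lemma Yv_add_apply (ι : (Fin m → Bool) ↪ Fin n) (b b' : Fin m → ℂ) (j : Fin n) :
    Yv ι (fun k => b k + b' k) j = Yv ι b j + Yv ι b' j := by
  unfold Yv
  simp only [WithLp.ofLp_toLp]
  rw [← mul_add, ← Finset.sum_add_distrib]
  congr 1
  apply Finset.sum_congr rfl
  intro s _
  rw [Xw_add]
  split <;> simp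

lemma Yv_smul_apply (ι : (Fin m → Bool) ↪ Fin n) (a : ℂ) (b : Fin m → ℂ) (j : Fin n) :
    Yv ι (fun k => a * b k) j = a * Yv ι b j := by
  unfold Yv
  simp only [WithLp.ofLp_toLp]
  rw [Finset.sum_congr rfl (fun s _ => by rw [Xw_smul] : ∀ s ∈ Finset.univ,
    (if ι s = j then Xw (fun k => a * b k) s else 0) = (if ι s = j then a * Xw b s else 0))]
  rw [show ∑ s, (if ι s = j then a * Xw b s else 0) = a * ∑ s, (if ι s = j then Xw b s else 0) by
    rw [Finset.mul_sum]
    apply Finset.sum_congr rfl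
    intro s _
    split <;> simp]
  ring

/-- the embedding of `ℓ₂^{n+m}` into `Z₂ⁿ` -/
noncomputable def Smap (n m : ℕ) (ι : (Fin m → Bool) ↪ Fin n) :
    EuclideanSpace ℂ (Fin (n + m)) →ₗ[ℂ]
      (EuclideanSpace ℂ (Fin n) × EuclideanSpace ℂ (Fin n)) where
  toFun w :=
    ((WithLp.toLp 2 (fun j => w (Fin.castAdd m j)
        + ((Real.log (Real.sqrt (2 ^ m)) : ℝ) : ℂ) * Yv ι (fun k => w (Fin.natAdd n k)) j) :
          EuclideanSpace ℂ (Fin n)),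
      Yv ι (fun k => w (Fin.natAdd n k)))
  map_add' w w' := by
    have hb : (fun k => (w + w') (Fin.natAdd n k))
        = fun k => w (Fin.natAdd n k) + w' (Fin.natAdd n k) := rfl
    apply Prod.ext
    · ext j
      show (w + w') (Fin.castAdd m j) + _ * Yv ι (fun k => (w + w') (Fin.natAdd n k)) j = _
      rw [hb, Yv_add_apply]
      show _ = (w (Fin.castAdd m j) + _ * Yv ι (fun k => w (Fin.natAdd n k)) j)
        + (w' (Fin.castAdd m j) + _ * Yv ι (fun k => w' (Fin.natAdd n k)) j)
      show (w (Fin.castAdd m j) + w' (Fin.castAdd m j)) + _ * _ = _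
      ring
    · ext j
      show Yv ι (fun k => (w + w') (Fin.natAdd n k)) j = _
      rw [hb, Yv_add_apply]
      rfl
  map_smul' a w := by
    have hb : (fun k => (a • w) (Fin.natAdd n k))
        = fun k => a * w (Fin.natAdd n k) := rfl
    apply Prod.ext
    · ext j
      show (a • w) (Fin.castAdd m j) + _ * Yv ι (fun k => (a • w) (Fin.natAdd n k)) j = _
      rw [hb, Yv_smul_apply]
      show a * w (Fin.castAdd m j) + _ = a * (w (Fin.castAdd m j) + _ * _)
      ring
    · ext j
      show Yv ι (fun k => (a • w) (Fin.natAdd n k)) j = _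
      rw [hb, Yv_smul_apply]
      rfl

lemma KP_zero (n : ℕ) : KP n 0 = 0 := by
  ext j
  simp [KP]

lemma two_pow_floor_le {n : ℕ} (hn : 2 ≤ n) : 2 ^ ⌊Real.log n⌋₊ ≤ n := by
  have hn1 : (1:ℝ) ≤ (n:ℝ) := by
    have : (1:ℕ) ≤ n := le_trans (by norm_num) hn
    exact_mod_cast this
  have hlog0 : 0 ≤ Real.log n := Real.log_nonneg hn1
  set m := ⌊Real.log (n:ℝ)⌋₊ with hmdef
  have hmle : (m:ℝ) ≤ Real.log n := Nat.floor_le hlog0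
  have h2 : Real.log 2 ≤ 1 := by nlinarith [Real.log_two_lt_d9]
  have hreal : ((2:ℝ)) ^ m ≤ (n:ℝ) := by
    have e1 : ((2:ℝ)) ^ m = Real.exp ((m:ℝ) * Real.log 2) := by
      rw [Real.exp_nat_mul, Real.exp_log (by norm_num : (0:ℝ) < 2)]
    rw [e1, ← Real.exp_log (by linarith : (0:ℝ) < (n:ℝ))]
    apply Real.exp_le_exp.mpr
    calc (m:ℝ) * Real.log 2 ≤ (m:ℝ) * 1 :=
          mul_le_mul_of_nonneg_left h2 (Nat.cast_nonneg m)
      _ = (m:ℝ) := by ring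
      _ ≤ Real.log n := hmle
  exact_mod_cast hreal

set_option maxHeartbeats 2000000 in
/-- the key estimate -/
lemma Smap_estimate (n m : ℕ) (ι : (Fin m → Bool) ↪ Fin n)
    (w : EuclideanSpace ℂ (Fin (n + m))) :
    (5:ℝ)⁻¹ * ‖w‖ ≤ qKP n (Smap n m ι w) ∧ qKP n (Smap n m ι w) ≤ 5 * ‖w‖ := by
  set b : Fin m → ℂ := fun k => w (Fin.natAdd n k) with hbdef
  set xp : EuclideanSpace ℂ (Fin n) := WithLp.toLp 2 (fun j => w (Fin.castAdd m j)) with hxpdef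
  set β := ∑ k, Complex.normSq (b k) with hβ
  have hβ0 : 0 ≤ β := Finset.sum_nonneg fun k _ => Complex.normSq_nonneg _
  set sβ := Real.sqrt β with hsβ
  have hsβ0 : 0 ≤ sβ := Real.sqrt_nonneg _
  have hsβsq : sβ ^ 2 = β := Real.sq_sqrt hβ0
  set u := ‖xp‖ with hu
  have hu0 : 0 ≤ u := norm_nonneg _
  -- decompose the quasi-norm
  have hq : qKP n (Smap n m ι w) = ‖xp + Dv ι b‖ + ‖Yv ι b‖ := by
    have e1 : (Smap n m ι w).1 - KP n ((Smap n m ι w).2) = xp + Dv ι b := by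
      ext j
      show (w (Fin.castAdd m j) + _ * Yv ι b j) - KP n (Yv ι b) j = xp j + Dv ι b j
      simp only [Dv, hxpdef]
      ring
    show ‖(Smap n m ι w).1 - KP n ((Smap n m ι w).2)‖ + ‖(Smap n m ι w).2‖ = _
    rw [e1]
    rfl
  have hY : ‖Yv ι b‖ = sβ := norm_Yv ι b
  -- the norm of w
  have hw : ‖w‖ ^ 2 = u ^ 2 + β := by
    rw [EuclideanSpace.norm_eq w, Real.sq_sqrt (Finset.sum_nonneg fun i _ => by positivity)]
    rw [Fin.sum_univ_add]
    congr 1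
    · rw [hu, hxpdef, EuclideanSpace.norm_eq,
        Real.sq_sqrt (Finset.sum_nonneg fun i _ => by positivity)]
    · rw [hβ]
      apply Finset.sum_congr rfl
      intro k _
      rw [hbdef, Complex.sq_norm]
  have hwn0 : 0 ≤ ‖w‖ := norm_nonneg _
  -- bound on the derivation term
  have hD : ‖Dv ι b‖ ≤ 2 * sβ := by
    have h1 : ‖Dv ι b‖ ^ 2 ≤ 4 * β := by
      rw [EuclideanSpace.norm_eq,
        Real.sq_sqrt (Finset.sum_nonneg fun i _ => by positivity)]
      exact sum_sq_norm_Dv ι b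
    have h2 : (2 * sβ) ^ 2 = 4 * β := by rw [mul_pow, hsβsq]; ring
    nlinarith [norm_nonneg (Dv ι b)]
  have hd0 : 0 ≤ ‖Dv ι b‖ := norm_nonneg _
  -- triangle inequalities
  have ht1 : ‖xp + Dv ι b‖ ≤ u + ‖Dv ι b‖ := norm_add_le _ _
  have ht2 : u ≤ ‖xp + Dv ι b‖ + ‖Dv ι b‖ := by
    calc u = ‖(xp + Dv ι b) - Dv ι b‖ := by rw [add_sub_cancel_right]
      _ ≤ ‖xp + Dv ι b‖ + ‖Dv ι b‖ := norm_sub_le _ _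
  have hq0 : 0 ≤ ‖xp + Dv ι b‖ := norm_nonneg _
  rw [hq, hY]
  constructor
  · -- lower bound
    have hwle : ‖w‖ ≤ u + sβ := by
      nlinarith [hw, hsβsq, hu0, hsβ0, hwn0, mul_nonneg hu0 hsβ0]
    rw [inv_mul_le_iff₀ (by norm_num : (0:ℝ) < 5)]
    nlinarith [hwle, ht2, hD, hq0, hsβ0]
  · -- upper bound
    have hule : u ≤ ‖w‖ := by nlinarith [hw, hu0, hwn0, hβ0]
    have hsle : sβ ≤ ‖w‖ := by nlinarith [hw, hsβsq, hsβ0, hwn0, sq_nonneg u]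
    nlinarith [ht1, hD, hule, hsle, hwn0]

end Stmt11

/-- there is `C ≥ 1` such that `Z₂ⁿ` contains a `C`-isomorphic copy of
`ℓ₂^{n + ⌊log n⌋}` for every `n ≥ 2`. -/
theorem stmt11 : ∃ C : ℝ, 1 ≤ C ∧ ∀ n : ℕ, 2 ≤ n →
    ∃ S : EuclideanSpace ℂ (Fin (n + ⌊Real.log n⌋₊)) →ₗ[ℂ]
        (EuclideanSpace ℂ (Fin n) × EuclideanSpace ℂ (Fin n)),
      Function.Injective S ∧
      ∀ w, C⁻¹ * ‖w‖ ≤ qKP n (S w) ∧ qKP n (S w) ≤ C * ‖w‖ := by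
  refine ⟨5, by norm_num, ?_⟩
  intro n hn
  set m := ⌊Real.log n⌋₊ with hm
  have hcard : Fintype.card (Fin m → Bool) ≤ Fintype.card (Fin n) := by
    rw [Fintype.card_fun, Fintype.card_bool, Fintype.card_fin, Fintype.card_fin]
    exact Stmt11.two_pow_floor_le hn
  obtain ⟨ι⟩ := Function.Embedding.nonempty_of_card_le hcard
  refine ⟨Stmt11.Smap n m ι, ?_, fun w => Stmt11.Smap_estimate n m ι w⟩
  intro w1 w2 h
  have h0 : Stmt11.Smap n m ι (w1 - w2) = 0 := by rw [map_sub, h, sub_self]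
  have hq0 : qKP n (Stmt11.Smap n m ι (w1 - w2)) = 0 := by
    rw [h0]
    show ‖(0 : EuclideanSpace ℂ (Fin n)) - KP n (0 : EuclideanSpace ℂ (Fin n))‖
      + ‖(0 : EuclideanSpace ℂ (Fin n))‖ = 0
    rw [Stmt11.KP_zero]
    simp
  have hlow := (Stmt11.Smap_estimate n m ι (w1 - w2)).1
  rw [hq0] at hlow
  have : ‖w1 - w2‖ ≤ 0 := by nlinarith [norm_nonneg (w1 - w2)]
  have : w1 - w2 = 0 := by
    rw [← norm_le_zero_iff]
    exact this
  exact sub_eq_zero.mp this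
end
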